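/- arXiv:1806.01602 — 5 statements merged into one kernel-verified Lean document; each statement's English description precedes it below -/
import Mathlib

section
/- (Proposition 1: average linear gain of a nonlinear PA.) For every real P > 0, ∫_ℂ f(z) · conj(z) · ρ_P(z) dz = P · ḡ(P), where ḡ(P) = Σ_{m=0}^{M} β_{2m+1} (m+1)! P^m. Equivalently, the Bussgang linear gain E{f(u) u*} / E{|u|²} of the PA driven by a circularly symmetric complex Gaussian input u of variance P equals ḡ(P). -/
open MeasureTheory

/-- The memoryless polynomial PA model `f(z) = Σ_{m=0}^{M} β_{2m+1} |z|^{2m} z`,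
where `β m` stands for the coefficient `β_{2m+1}`. -/
noncomputable def paModel (M : ℕ) (β : ℕ → ℂ) (z : ℂ) : ℂ :=
  ∑ m ∈ Finset.range (M + 1), β m * (‖z‖ : ℂ) ^ (2 * m) * z

/-- The average (Bussgang) linear gain `ḡ(P) = Σ_{m=0}^{M} β_{2m+1} (m+1)! Pᵐ`. -/
noncomputable def avgGain (M : ℕ) (β : ℕ → ℂ) (P : ℝ) : ℂ :=
  ∑ m ∈ Finset.range (M + 1), β m * ((Nat.factorial (m + 1) : ℕ) : ℂ) * (P : ℂ) ^ m

open Real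

lemma gauss_integrable {b : ℝ} (hb : 0 < b) : Integrable (fun z : ℂ => Real.exp (-b * ‖z‖^2)) := by
  have h := (GaussianFourier.integrable_cexp_neg_mul_sq_norm_add (V := ℂ)
    (b := (b:ℂ)) (by simpa using hb) 0 0).norm
  simp only [neg_mul, Complex.norm_exp] at h ⊢
  convert h using 3 with z
  simp [← Complex.ofReal_pow]

lemma mom_integrable (k : ℕ) {b : ℝ} (hb : 0 < b) :
    Integrable (fun z : ℂ => ‖z‖ ^ k * Real.exp (-b * ‖z‖ ^ 2)) := by
  have hmaj : Integrable (fun z : ℂ => (1 + k.factorial * (2/b)^k) * Real.exp (-(b/2) * ‖z‖^2)) :=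
    (gauss_integrable (by positivity)).const_mul _
  refine hmaj.mono' ?_ (Filter.Eventually.of_forall fun z => ?_)
  · apply Continuous.aestronglyMeasurable
    continuity
  · rw [Real.norm_eq_abs, abs_of_nonneg (by positivity)]
    set x := ‖z‖ with hx
    have hx0 : (0:ℝ) ≤ x := norm_nonneg z
    have h1 : x ^ k ≤ 1 + k.factorial * (2/b)^k * Real.exp ((b/2) * x^2) := by
      rcases le_total x 1 with h | h
      · have h0 : x ^ k ≤ 1 := pow_le_one₀ hx0 h
        have hpos : (0:ℝ) ≤ k.factorial * (2/b)^k * Real.exp ((b/2) * x^2) := by positivity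
        linarith
      · have h2 : x ^ k ≤ x ^ (2*k) := pow_le_pow_right₀ h (by omega)
        have h3 : ((b/2) * x^2) ^ k / k.factorial ≤ Real.exp ((b/2) * x^2) :=
          Real.pow_div_factorial_le_exp _ (by positivity) k
        have h4 : x ^ (2*k) = (2/b)^k * (((b/2) * x^2) ^ k) := by
          rw [mul_pow, ← mul_assoc, ← mul_pow, div_mul_div_comm]
          rw [show 2*b/(b*2) = 1 by field_simp, one_pow, one_mul, pow_mul]
        have h5 : ((b/2)*x^2)^k ≤ k.factorial * Real.exp ((b/2)*x^2) := by
          rw [div_le_iff₀ (by positivity : (0:ℝ) < (k.factorial:ℝ))] at h3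
          linarith
        have h6 : (0:ℝ) ≤ (2/b)^k := by positivity
        nlinarith
    have eA : Real.exp ((b/2)*x^2) * Real.exp (-b*x^2) = Real.exp (-(b/2)*x^2) := by
      rw [← Real.exp_add]; ring_nf
    have eB : Real.exp (-b*x^2) ≤ Real.exp (-(b/2)*x^2) := by
      apply Real.exp_le_exp.2; nlinarith [sq_nonneg x]
    have h7 := mul_le_mul_of_nonneg_right h1 (Real.exp_pos (-b*x^2)).le
    have hK : (0:ℝ) ≤ (k.factorial:ℝ) * (2/b)^k := by positivity
    nlinarith [Real.exp_pos (-(b/2)*x^2)]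

lemma moment (k : ℕ) {P : ℝ} (hP : 0 < P) :
    ∫ z : ℂ, ‖z‖ ^ (2*k) * Real.exp (-(‖z‖)^2 / P)
      = π * P^(k+1) * k.factorial := by
  have h2k : (-2:ℝ) < 2*(k:ℝ) := by
    have := Nat.cast_nonneg (α := ℝ) k; linarith
  have h := Complex.integral_rpow_mul_exp_neg_mul_rpow (p := 2) (q := 2*(k:ℝ))
    (b := P⁻¹) one_le_two h2k (inv_pos.2 hP)
  have hfun : (fun z : ℂ => ‖z‖ ^ (2*k) * Real.exp (-(‖z‖)^2 / P))
      = fun z : ℂ => ‖z‖ ^ (2*(k:ℝ)) * Real.exp (-P⁻¹ * ‖z‖ ^ (2:ℝ)) := by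
    funext z
    rw [show (2*(k:ℝ)) = ((2*k : ℕ):ℝ) by push_cast; ring,
      Real.rpow_natCast, Real.rpow_two]
    congr 1
    rw [neg_mul, neg_div, inv_mul_eq_div]
  rw [hfun, h]
  have e1 : (2*(k:ℝ)+2)/2 = (k:ℝ)+1 := by ring
  rw [e1, Real.Gamma_nat_eq_factorial,
    show (-(2*(k:ℝ)+2)/2) = -((k:ℝ)+1) by ring,
    Real.inv_rpow hP.le, ← Real.rpow_neg_one, ← Real.rpow_natCast P (k+1), ← Real.rpow_mul hP.le]
  rw [show (-((k:ℝ)+1) * -1) = ((k+1:ℕ):ℝ) by push_cast; ring]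
  ring

lemma moment_integrable (k : ℕ) {P : ℝ} (hP : 0 < P) :
    Integrable (fun z : ℂ => ‖z‖ ^ k * Real.exp (-(‖z‖)^2 / P)) := by
  have h := mom_integrable k (inv_pos.2 hP)
  convert h using 3 with z
  rw [neg_mul, neg_div, inv_mul_eq_div]


lemma integral_ofReal' {f : ℂ → ℝ} : ∫ z : ℂ, ((f z : ℝ) : ℂ) = ((∫ z, f z : ℝ) : ℂ) :=
  integral_ofReal

/-- Proposition 1: `E{f(u) u*} = P ḡ(P)` for a circularly symmetric complex Gaussian
input `u` with variance `P`, i.e. the Bussgang linear gain of the PA is `ḡ(P)`. -/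
theorem avg_linear_gain (M : ℕ) (β : ℕ → ℂ) (P : ℝ) (hP : 0 < P) :
    ∫ z : ℂ, paModel M β z * star z *
        (((Real.pi * P)⁻¹ * Real.exp (-‖z‖ ^ 2 / P) : ℝ) : ℂ) =
      (P : ℂ) * avgGain M β P := by
  have hπ : (0:ℝ) < π := Real.pi_pos
  have hfun : (fun z : ℂ => paModel M β z * star z *
        (((π * P)⁻¹ * Real.exp (-(‖z‖) ^ 2 / P) : ℝ) : ℂ))
      = fun z : ℂ => ∑ m ∈ Finset.range (M+1),
          β m * (((π*P)⁻¹ * (‖z‖ ^ (2*(m+1)) *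
            Real.exp (-(‖z‖)^2 / P)) : ℝ) : ℂ) := by
    funext z
    rw [paModel, Finset.sum_mul, Finset.sum_mul]
    refine Finset.sum_congr rfl fun m _ => ?_
    have hz : z * star z = ((‖z‖ : ℂ))^2 := by
      rw [show star z = (starRingEnd ℂ) z from rfl, Complex.mul_conj, ← Complex.sq_norm]
      push_cast
      ring
    push_cast
    rw [show β m * (‖z‖ : ℂ) ^ (2*m) * z * star z
        = β m * (‖z‖ : ℂ) ^ (2*m) * (z * star z) by ring, hz]
    ring
  rw [hfun, integral_finset_sum _ (fun m _ => by
    exact ((((moment_integrable (2*(m+1)) hP).const_mul ((π*P)⁻¹)).ofReal).const_mul (β m)))]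
  rw [avgGain, Finset.mul_sum]
  refine Finset.sum_congr rfl fun m _ => ?_
  rw [integral_const_mul, integral_ofReal', integral_const_mul, moment (m+1) hP]
  have hπ0 : ((π:ℝ):ℂ) ≠ 0 := by exact_mod_cast hπ.ne'
  have hP0 : ((P:ℝ):ℂ) ≠ 0 := by exact_mod_cast hP.ne'
  push_cast
  field_simp
  ring
end

section
/- (Proposition 2, zero-mean part.) Let C be an N×N Hermitian positive definite complex matrix and set P_k = Re(C_{kk}). Then for every index k, ∫_{ℂ^N} ( f(u_k) − ḡ(P_k) · u_k ) · p_C(u) du = 0; that is, the nonlinear distortion vector d with entries d_k = f(u_k) − ḡ(P_k) u_k has zero mean when u is a circularly symmetric complex Gaussian vector with covariance C. -/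
open MeasureTheory Matrix ComplexOrder

/-- The circularly symmetric complex Gaussian density on `ℂ^N` with covariance `C`:
`p_C(u) = π^{-N} (det C)⁻¹ exp(-Re(uᴴ C⁻¹ u))`. -/
noncomputable def gaussDensity {N : ℕ} (C : Matrix (Fin N) (Fin N) ℂ)
    (u : Fin N → ℂ) : ℝ :=
  (Real.pi ^ N)⁻¹ * (C.det.re)⁻¹ *
    Real.exp (-(dotProduct (star u) (C⁻¹.mulVec u)).re)

/-- Proposition 2 (zero-mean part): the nonlinear distortion vector with entries
`d_k = f(u_k) - ḡ(P_k) u_k`, `P_k = Re(C_{kk})`, has zero mean when `u` is a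
circularly symmetric complex Gaussian with Hermitian positive definite covariance `C`. -/
theorem distortion_zero_mean (M : ℕ) (β : ℕ → ℂ) (N : ℕ)
    (C : Matrix (Fin N) (Fin N) ℂ) (hC : C.PosDef) (k : Fin N) :
    ∫ u : Fin N → ℂ,
        (paModel M β (u k) - avgGain M β (C k k).re * u k) *
          ((gaussDensity C u : ℝ) : ℂ) = 0 := by
  set F : (Fin N → ℂ) → ℂ := fun u =>
    (paModel M β (u k) - avgGain M β (C k k).re * u k) *
      ((gaussDensity C u : ℝ) : ℂ) with hF
  have hpa : ∀ z : ℂ, paModel M β (-z) = -paModel M β z := by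
    intro z
    simp [paModel, mul_neg, Finset.sum_neg_distrib]
  have hgd : ∀ u : Fin N → ℂ, gaussDensity C (-u) = gaussDensity C u := by
    intro u
    simp [gaussDensity, Matrix.mulVec_neg, dotProduct_neg,
      neg_dotProduct]
  have hodd : ∀ u : Fin N → ℂ, F (-u) = -F u := by
    intro u
    simp only [hF, Pi.neg_apply, hpa, hgd, mul_neg, neg_mul]
    ring
  have h1 : ∫ u, F (-u) = ∫ u, F u := integral_neg_eq_self F volume
  have h2 : ∫ u, F (-u) = -∫ u, F u := by
    simp only [hodd]
    exact integral_neg F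
  have h3 := h1.symm.trans h2
  linear_combination h3 / 2
end

section
/- (Lemma 3: Loewner monotonicity of the log-det SINR functional.) Let Z and Z' be N×N Hermitian positive semidefinite complex matrices such that Z' − Z is positive semidefinite, and let α₁, α₂ ≥ 0 be reals. Then det( I + α₁ (I + α₂ Z)⁻¹ Z ) and det( I + α₁ (I + α₂ Z')⁻¹ Z' ) are real numbers and Re( det( I + α₁ (I + α₂ Z)⁻¹ Z ) ) ≤ Re( det( I + α₁ (I + α₂ Z')⁻¹ Z' ) ); equivalently, the functional f(Z) = log₂ det( I + α₁ (I + α₂ Z)⁻¹ Z ) is monotone nondecreasing with respect to the Loewner (positive semidefinite) order. -/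
open Matrix ComplexOrder
open scoped MatrixOrder
set_option linter.unusedSectionVars false
set_option maxHeartbeats 1000000

section Aux
variable {n : Type*} [Fintype n] [DecidableEq n]

lemma aux_smul_psd {c : ℝ} (hc : 0 ≤ c) {P : Matrix n n ℂ} (hP : P.PosSemidef) :
    ((c : ℂ) • P).PosSemidef := by
  refine PosSemidef.of_dotProduct_mulVec_nonneg ?_ fun x => ?_
  · have h : ((c : ℂ) • P)ᴴ = (star (c : ℂ)) • Pᴴ := conjTranspose_smul _ _
    rw [Matrix.IsHermitian, h, hP.1.eq, Complex.star_def, Complex.conj_ofReal]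
  · rw [smul_mulVec, dotProduct_smul, smul_eq_mul]
    exact mul_nonneg (by exact_mod_cast Complex.zero_le_real.2 hc) (hP.dotProduct_mulVec_nonneg x)

lemma aux_isUnit_sqrt_det {A : Matrix n n ℂ} (hA : A.PosDef) :
    IsUnit (CFC.sqrt A).det := by
  have h : (CFC.sqrt A).det * (CFC.sqrt A).det = A.det := by
    rw [← det_mul, CFC.sqrt_mul_sqrt_self A hA.posSemidef.nonneg]
  refine isUnit_iff_ne_zero.2 fun h0 => ?_
  exact hA.det_pos.ne' (by rw [← h, h0, mul_zero])

lemma aux_posdef_conj {B S : Matrix n n ℂ} (hB : B.PosDef) (hS : IsUnit S.det) :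
    (Sᴴ * B * S).PosDef := by
  refine PosDef.of_dotProduct_mulVec_pos (isHermitian_conjTranspose_mul_mul S hB.1) fun x hx => ?_
  have hSx : S *ᵥ x ≠ 0 := by
    intro h
    apply hx
    exact Matrix.mulVec_injective_iff_isUnit.2 ((Matrix.isUnit_iff_isUnit_det S).2 hS)
      (by simpa using h)
  simpa only [star_mulVec, dotProduct_mulVec, vecMul_vecMul] using hB.dotProduct_mulVec_pos hSx

lemma aux_inv_antitone {A B : Matrix n n ℂ} (hA : A.PosDef) (hB : B.PosDef)
    (h : (A - B).PosSemidef) : (B⁻¹ - A⁻¹).PosSemidef := by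
  set T := CFC.sqrt A with hTdef
  have hTH : Tᴴ = T := (CFC.sqrt_nonneg A).posSemidef.1
  have hTT : T * T = A := CFC.sqrt_mul_sqrt_self A hA.posSemidef.nonneg
  have hTu : IsUnit T.det := aux_isUnit_sqrt_det hA
  set S := T⁻¹ with hSdef
  have hSH : Sᴴ = S := by rw [hSdef, Matrix.conjTranspose_nonsing_inv, hTH]
  have hST : S * T = 1 := Matrix.nonsing_inv_mul T hTu
  have hTS : T * S = 1 := Matrix.mul_nonsing_inv T hTu
  have hSu : IsUnit S.det := by
    refine isUnit_iff_ne_zero.2 fun h0 => ?_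
    have h1 : S.det * T.det = 1 := by rw [← det_mul, hST, det_one]
    rw [h0, zero_mul] at h1; exact zero_ne_one h1
  have hSS : S * S = A⁻¹ := by rw [hSdef, ← Matrix.mul_inv_rev, hTT]
  set D := S * B * S with hDdef
  have hDpd : D.PosDef := by
    have h2 := aux_posdef_conj hB hSu
    rwa [hSH] at h2
  have hSAS : S * A * S = 1 := by
    rw [← hTT, ← mul_assoc, mul_assoc S T T, ← mul_assoc, hST, one_mul, hTS]
  have h1D : ((1 : Matrix n n ℂ) - D).PosSemidef := by
    have h2 := h.conjTranspose_mul_mul_same S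
    rw [hSH] at h2
    have e : S * (A - B) * S = 1 - D := by
      rw [hDdef, Matrix.mul_sub, Matrix.sub_mul, hSAS]
    rwa [e] at h2
  set W := CFC.sqrt D with hWdef
  have hWH : Wᴴ = W := (CFC.sqrt_nonneg D).posSemidef.1
  have hWW : W * W = D := CFC.sqrt_mul_sqrt_self D hDpd.posSemidef.nonneg
  have hWu : IsUnit W.det := aux_isUnit_sqrt_det hDpd
  set R := W⁻¹ with hRdef
  have hRH : Rᴴ = R := by rw [hRdef, Matrix.conjTranspose_nonsing_inv, hWH]
  have hRW : R * W = 1 := Matrix.nonsing_inv_mul W hWu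
  have hWR : W * R = 1 := Matrix.mul_nonsing_inv W hWu
  have hRR : R * R = D⁻¹ := by rw [hRdef, ← Matrix.mul_inv_rev, hWW]
  have hRDR : R * D * R = 1 := by
    rw [← hWW, ← mul_assoc, mul_assoc R W W, ← mul_assoc, hRW, one_mul, hWR]
  have hDinv : (D⁻¹ - 1).PosSemidef := by
    have h3 := h1D.conjTranspose_mul_mul_same R
    rw [hRH] at h3
    have e : R * (1 - D) * R = D⁻¹ - 1 := by
      rw [Matrix.mul_sub, Matrix.sub_mul, Matrix.mul_one, hRR, hRDR]
    rwa [e] at h3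
  have h4 := hDinv.conjTranspose_mul_mul_same S
  rw [hSH] at h4
  have hSinv : S⁻¹ = T := by rw [hSdef, Matrix.nonsing_inv_nonsing_inv T hTu]
  have hDinv' : D⁻¹ = T * B⁻¹ * T := by
    rw [hDdef, Matrix.mul_inv_rev, Matrix.mul_inv_rev, hSinv, mul_assoc]
  have key : S * (T * B⁻¹ * T) * S = B⁻¹ := by
    simp only [← mul_assoc]
    rw [hST, one_mul, mul_assoc, hTS, mul_one]
  have e : S * (D⁻¹ - 1) * S = B⁻¹ - A⁻¹ := by
    rw [hDinv', Matrix.mul_sub, Matrix.sub_mul, Matrix.mul_one, hSS, key]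
  rwa [e] at h4

lemma aux_det_one_add_psd {E : Matrix n n ℂ} (hE : E.PosSemidef) :
    ∃ c : ℝ, 1 ≤ c ∧ ((1 : Matrix n n ℂ) + E).det = (c : ℂ) := by
  refine ⟨∏ i, (1 + hE.1.eigenvalues i), ?_, ?_⟩
  · have h1 : ∏ _i : n, (1 : ℝ) ≤ ∏ i, (1 + hE.1.eigenvalues i) := by
      apply Finset.prod_le_prod
      · intro i _; linarith
      · intro i _; linarith [hE.eigenvalues_nonneg i]
    simpa using h1
  · set U := (Matrix.IsHermitian.eigenvectorUnitary hE.1 : Matrix n n ℂ) with hUdef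
    have hU1 : U * star U = 1 := Matrix.mem_unitaryGroup_iff.mp
      (Matrix.IsHermitian.eigenvectorUnitary hE.1).2
    have hsp : E = U * diagonal (RCLike.ofReal ∘ hE.1.eigenvalues) * star U :=
      hE.1.spectral_theorem
    have h1 : (1 : Matrix n n ℂ) + E
        = U * (1 + diagonal (RCLike.ofReal ∘ hE.1.eigenvalues)) * star U := by
      rw [Matrix.mul_add, Matrix.add_mul, Matrix.mul_one, hU1, ← hsp]
    rw [h1, Matrix.det_mul_right_comm, hU1, one_mul, ← Matrix.diagonal_one,
      Matrix.diagonal_add, Matrix.det_diagonal]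
    push_cast
    rfl

lemma aux_det_mono {P Q : Matrix n n ℂ} (hP : P.PosDef) (h : (Q - P).PosSemidef) :
    (P.det).im = 0 ∧ (Q.det).im = 0 ∧ (P.det).re ≤ (Q.det).re := by
  set T := CFC.sqrt P with hTdef
  have hTT : T * T = P := CFC.sqrt_mul_sqrt_self P hP.posSemidef.nonneg
  have hTu : IsUnit T.det := aux_isUnit_sqrt_det hP
  set S := T⁻¹ with hSdef
  have hST : S * T = 1 := Matrix.nonsing_inv_mul T hTu
  have hTS : T * S = 1 := Matrix.mul_nonsing_inv T hTu
  set E := S * (Q - P) * S with hEdef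
  have hEpsd : E.PosSemidef := by
    have h2 := h.conjTranspose_mul_mul_same S
    have hSH : Sᴴ = S := by
      rw [hSdef, Matrix.conjTranspose_nonsing_inv, (CFC.sqrt_nonneg P).posSemidef.1]
    rwa [hSH] at h2
  have hTET : T * E * T = Q - P := by
    rw [hEdef]
    simp only [← mul_assoc]
    rw [hTS, one_mul, mul_assoc, hST, mul_one]
  have hQ : Q = T * (1 + E) * T := by
    rw [Matrix.mul_add, Matrix.add_mul, Matrix.mul_one, hTT, hTET]
    abel
  obtain ⟨c, hc1, hcd⟩ := aux_det_one_add_psd hEpsd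
  have hdetQ : Q.det = P.det * (c : ℂ) := by
    rw [hQ, det_mul, det_mul, hcd, ← hTT, det_mul]
    ring
  have hPpos := hP.det_pos
  rw [Complex.lt_def] at hPpos
  obtain ⟨hre, him⟩ := hPpos
  simp only [Complex.zero_re, Complex.zero_im] at hre him
  refine ⟨him.symm, ?_, ?_⟩
  · rw [hdetQ, Complex.mul_im, Complex.ofReal_im, Complex.ofReal_re, ← him]
    ring
  · rw [hdetQ, Complex.mul_re, Complex.ofReal_im, Complex.ofReal_re, ← him]
    have hle : P.det.re ≤ P.det.re * c := le_mul_of_one_le_right hre.le hc1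
    linarith

end Aux

/-- Lemma 3: Loewner monotonicity of the log-det SINR functional. If `Z, Z'` are
Hermitian positive semidefinite with `Z' - Z` positive semidefinite and
`α₁, α₂ ≥ 0`, then both `det(I + α₁ (I + α₂ Z)⁻¹ Z)` and
`det(I + α₁ (I + α₂ Z')⁻¹ Z')` are real numbers, and the former is at most the
latter. -/
theorem det_sinr_loewner_monotone (N : ℕ) (Z Z' : Matrix (Fin N) (Fin N) ℂ)
    (hZ : Z.PosSemidef) (hZ' : Z'.PosSemidef) (hle : (Z' - Z).PosSemidef)
    (α₁ α₂ : ℝ) (hα₁ : 0 ≤ α₁) (hα₂ : 0 ≤ α₂) :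
    (Matrix.det (1 + (α₁ : ℂ) • ((1 + (α₂ : ℂ) • Z)⁻¹ * Z))).im = 0 ∧
    (Matrix.det (1 + (α₁ : ℂ) • ((1 + (α₂ : ℂ) • Z')⁻¹ * Z'))).im = 0 ∧
    (Matrix.det (1 + (α₁ : ℂ) • ((1 + (α₂ : ℂ) • Z)⁻¹ * Z))).re ≤
      (Matrix.det (1 + (α₁ : ℂ) • ((1 + (α₂ : ℂ) • Z')⁻¹ * Z'))).re := by
  rcases eq_or_lt_of_le hα₂ with h0 | hpos
  · -- case α₂ = 0
    subst h0
    simp only [Complex.ofReal_zero, zero_smul, add_zero, inv_one, one_mul]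
    have hP : ((1 : Matrix (Fin N) (Fin N) ℂ) + (α₁ : ℂ) • Z).PosDef :=
      Matrix.PosDef.one.add_posSemidef (aux_smul_psd hα₁ hZ)
    have hQP : (((1 : Matrix (Fin N) (Fin N) ℂ) + (α₁ : ℂ) • Z')
        - (1 + (α₁ : ℂ) • Z)).PosSemidef := by
      have h2 := aux_smul_psd hα₁ hle
      rw [smul_sub] at h2
      have e : ((1 : Matrix (Fin N) (Fin N) ℂ) + (α₁ : ℂ) • Z') - (1 + (α₁ : ℂ) • Z)
          = (α₁ : ℂ) • Z' - (α₁ : ℂ) • Z := by abel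
      rwa [e]
    exact aux_det_mono hP hQP
  · -- case 0 < α₂
    set A := (1 : Matrix (Fin N) (Fin N) ℂ) + (α₂ : ℂ) • Z with hAdef
    set A' := (1 : Matrix (Fin N) (Fin N) ℂ) + (α₂ : ℂ) • Z' with hA'def
    have hApd : A.PosDef := Matrix.PosDef.one.add_posSemidef (aux_smul_psd hα₂ hZ)
    have hA'pd : A'.PosDef := Matrix.PosDef.one.add_posSemidef (aux_smul_psd hα₂ hZ')
    have key : ∀ (W : Matrix (Fin N) (Fin N) ℂ) (B : Matrix (Fin N) (Fin N) ℂ),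
        B = 1 + (α₂ : ℂ) • W → B.PosDef →
        B⁻¹ * W = ((α₂⁻¹ : ℝ) : ℂ) • (1 - B⁻¹) := by
      intro W B hBdef hBpd
      have hBu : IsUnit B.det := isUnit_iff_ne_zero.2 hBpd.det_pos.ne'
      have h1 : B⁻¹ * B = 1 := Matrix.nonsing_inv_mul B hBu
      have h2 : B⁻¹ * (1 + (α₂ : ℂ) • W) = 1 := by rw [← hBdef]; exact h1
      have h3 : (α₂ : ℂ) • (B⁻¹ * W) = 1 - B⁻¹ := by
        rw [← h2, Matrix.mul_add, Matrix.mul_one, mul_smul_comm]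
        abel
      rw [← one_smul ℂ (B⁻¹ * W), show (1 : ℂ) = ((α₂⁻¹ : ℝ) : ℂ) * (α₂ : ℂ) by
        rw [← Complex.ofReal_mul, inv_mul_cancel₀ hpos.ne', Complex.ofReal_one],
        ← smul_smul, h3]
    have hinvZ := key Z A hAdef hApd
    have hinvZ' := key Z' A' hA'def hA'pd
    set c : ℝ := α₁ * α₂⁻¹ with hcdef
    have hc0 : 0 ≤ c := mul_nonneg hα₁ (inv_nonneg.2 hα₂)
    have hM : (1 : Matrix (Fin N) (Fin N) ℂ) + (α₁ : ℂ) • (A⁻¹ * Z)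
        = 1 + (c : ℂ) • (1 - A⁻¹) := by
      rw [hinvZ, smul_smul, ← Complex.ofReal_mul]
    have hM' : (1 : Matrix (Fin N) (Fin N) ℂ) + (α₁ : ℂ) • (A'⁻¹ * Z')
        = 1 + (c : ℂ) • (1 - A'⁻¹) := by
      rw [hinvZ', smul_smul, ← Complex.ofReal_mul]
    have h1A : ((1 : Matrix (Fin N) (Fin N) ℂ) - A⁻¹).PosSemidef := by
      have hA1 : (A - 1).PosSemidef := by
        have e : A - 1 = (α₂ : ℂ) • Z := by rw [hAdef]; abel
        rw [e]; exact aux_smul_psd hα₂ hZ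
      have h2 := aux_inv_antitone hApd Matrix.PosDef.one hA1
      rwa [inv_one] at h2
    have hPpd : ((1 : Matrix (Fin N) (Fin N) ℂ) + (c : ℂ) • (1 - A⁻¹)).PosDef :=
      Matrix.PosDef.one.add_posSemidef (aux_smul_psd hc0 h1A)
    have hAA' : (A⁻¹ - A'⁻¹).PosSemidef := by
      apply aux_inv_antitone hA'pd hApd
      have e : A' - A = (α₂ : ℂ) • Z' - (α₂ : ℂ) • Z := by rw [hAdef, hA'def]; abel
      rw [e, ← smul_sub]
      exact aux_smul_psd hα₂ hle
    have hdiff : (((1 : Matrix (Fin N) (Fin N) ℂ) + (c : ℂ) • (1 - A'⁻¹))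
        - (1 + (c : ℂ) • (1 - A⁻¹))).PosSemidef := by
      have h2 := aux_smul_psd hc0 hAA'
      have e : ((1 : Matrix (Fin N) (Fin N) ℂ) + (c : ℂ) • (1 - A'⁻¹))
          - (1 + (c : ℂ) • (1 - A⁻¹)) = (c : ℂ) • (A⁻¹ - A'⁻¹) := by
        rw [smul_sub, smul_sub, smul_sub]; abel
      rwa [e]
    have final := aux_det_mono hPpd hdiff
    rw [← hM, ← hM'] at final
    exact final
end

section
/- (Lemma 4: Rayleigh-quotient lower bound on the log-det SINR functional.) Let Z be an N×N Hermitian positive semidefinite complex matrix, let α₁, α₂ ≥ 0 be reals, and let r ∈ ℂ^N be a unit vector (rᴴ r = 1). Set t = Re(rᴴ Z r), which is a nonnegative real. Then 1 + α₁ t / (α₂ t + 1) ≤ Re( det( I + α₁ (I + α₂ Z)⁻¹ Z ) ); equivalently, log₂( 1 + α₁ rᴴZr / (α₂ rᴴZr + 1) ) ≤ log₂ det( I + α₁ (I + α₂ Z)⁻¹ Z ). -/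
open Matrix ComplexOrder

private lemma one_le_prod_real {N : ℕ} (s : Finset (Fin N)) (f : Fin N → ℝ)
    (h : ∀ i ∈ s, 1 ≤ f i) : 1 ≤ ∏ i ∈ s, f i := by
  calc (1:ℝ) = ∏ _i ∈ s, (1:ℝ) := by simp
  _ ≤ ∏ i ∈ s, f i := Finset.prod_le_prod (by intro i _; norm_num) h

private lemma key_real_ineq {N : ℕ} (lam w : Fin N → ℝ) (hlam : ∀ i, 0 ≤ lam i)
    (hw : ∀ i, 0 ≤ w i) (hw1 : ∑ i, w i = 1) (α₁ α₂ : ℝ) (hα₁ : 0 ≤ α₁) (hα₂ : 0 ≤ α₂) :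
    1 + α₁ * (∑ i, w i * lam i) / (α₂ * (∑ i, w i * lam i) + 1) ≤
      (∏ i, (1 + (α₁ + α₂) * lam i)) / ∏ i, (1 + α₂ * lam i) := by
  have hne : (Finset.univ : Finset (Fin N)).Nonempty := by
    by_contra h
    rw [Finset.not_nonempty_iff_eq_empty] at h
    rw [h] at hw1; simp at hw1
  obtain ⟨j, -, hj⟩ := Finset.exists_max_image Finset.univ lam hne
  set t := ∑ i, w i * lam i with ht
  have ht0 : 0 ≤ t := Finset.sum_nonneg fun i _ => mul_nonneg (hw i) (hlam i)
  have htle : t ≤ lam j := by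
    calc t ≤ ∑ i, w i * lam j := Finset.sum_le_sum fun i _ =>
          mul_le_mul_of_nonneg_left (hj i (Finset.mem_univ i)) (hw i)
    _ = lam j := by rw [← Finset.sum_mul, hw1, one_mul]
  have hd1 : 0 < α₂ * t + 1 := by positivity
  have hd2 : 0 < 1 + α₂ * lam j := by nlinarith [hlam j]
  set g : Fin N → ℝ := fun i => (1 + (α₁ + α₂) * lam i) / (1 + α₂ * lam i) with hg
  have hgd : ∀ i, 0 < 1 + α₂ * lam i := fun i => by nlinarith [hlam i]
  have hg1 : ∀ i, 1 ≤ g i := fun i => by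
    rw [hg, one_le_div (hgd i)]
    nlinarith [mul_nonneg hα₁ (hlam i)]
  have step1 : 1 + α₁ * t / (α₂ * t + 1) ≤ g j := by
    have heq : 1 + α₁ * t / (α₂ * t + 1) = (1 + (α₁ + α₂) * t) / (1 + α₂ * t) := by
      field_simp; ring
    rw [heq, hg, div_le_div_iff₀ (by linarith) hd2]
    nlinarith [mul_nonneg hα₁ (sub_nonneg.2 htle), mul_nonneg hα₂ ht0,
      mul_nonneg (mul_nonneg hα₁ hα₂) (mul_nonneg ht0 (hlam j)),
      mul_nonneg (mul_nonneg hα₁ (sub_nonneg.2 htle)) (mul_nonneg hα₂ ht0)]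
  refine step1.trans ?_
  have hprod : (∏ i, (1 + (α₁ + α₂) * lam i)) / (∏ i, (1 + α₂ * lam i)) = ∏ i, g i :=
    (Finset.prod_div_distrib _ _).symm
  rw [hprod, ← Finset.mul_prod_erase Finset.univ g (Finset.mem_univ j)]
  exact le_mul_of_one_le_right (le_trans zero_le_one (hg1 j))
    (one_le_prod_real _ _ fun i _ => hg1 i)


section spec
variable {N : ℕ} (Z : Matrix (Fin N) (Fin N) ℂ) (hZ : Z.PosSemidef)

private lemma det_one_add_smul (c : ℝ) :
    Matrix.det (1 + (c:ℂ) • Z) = ∏ i, (1 + (c:ℂ) * (hZ.1.eigenvalues i : ℂ)) := by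
  set U : Matrix (Fin N) (Fin N) ℂ := (hZ.1.eigenvectorUnitary : Matrix (Fin N) (Fin N) ℂ)
  have hU : U * star U = 1 := Matrix.mem_unitaryGroup_iff.mp hZ.1.eigenvectorUnitary.2
  have hspec := hZ.1.spectral_theorem
  set D : Matrix (Fin N) (Fin N) ℂ :=
    Matrix.diagonal (RCLike.ofReal ∘ hZ.1.eigenvalues) with hD
  have key : 1 + (c:ℂ) • Z = U * (1 + (c:ℂ) • D) * star U := by
    rw [mul_add, add_mul, mul_one, hU, Matrix.mul_smul, Matrix.smul_mul]
    exact congrArg (fun X => 1 + (c:ℂ) • X) hspec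
  rw [key, Matrix.det_mul_right_comm, hU, one_mul]
  have : (1 : Matrix (Fin N) (Fin N) ℂ) + (c:ℂ) • D =
      Matrix.diagonal (fun i => 1 + (c:ℂ) * (hZ.1.eigenvalues i : ℂ)) := by
    rw [hD, ← Matrix.diagonal_smul, ← Matrix.diagonal_one, ← Matrix.diagonal_add]
    congr 1
  rw [this, Matrix.det_diagonal]
end spec

section ray
variable {N : ℕ} (Z : Matrix (Fin N) (Fin N) ℂ) (hZ : Z.PosSemidef)
  (r : Fin N → ℂ)

private lemma ray_decomp (hr : dotProduct (star r) r = 1) :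
    ∃ w : Fin N → ℝ, (∀ i, 0 ≤ w i) ∧ (∑ i, w i) = 1 ∧
      (dotProduct (star r) (Z.mulVec r)).re = ∑ i, w i * hZ.1.eigenvalues i := by
  set U : Matrix (Fin N) (Fin N) ℂ := (hZ.1.eigenvectorUnitary : Matrix (Fin N) (Fin N) ℂ)
  have hU : U * star U = 1 := Matrix.mem_unitaryGroup_iff.mp hZ.1.eigenvectorUnitary.2
  have hspec := hZ.1.spectral_theorem
  set c : Fin N → ℂ := (star U) *ᵥ r with hc
  have hstarc : star c = star r ᵥ* U := by
    rw [hc, Matrix.star_mulVec, Matrix.star_eq_conjTranspose, Matrix.conjTranspose_conjTranspose]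
  refine ⟨fun i => Complex.normSq (c i), fun i => Complex.normSq_nonneg _, ?_, ?_⟩
  · have h1 : dotProduct (star c) c = 1 := by
      rw [hstarc, ← dotProduct_mulVec, hc, Matrix.mulVec_mulVec, hU, Matrix.one_mulVec, hr]
    have := congrArg Complex.re h1
    rw [dotProduct, Complex.re_sum] at this
    simpa [Pi.star_apply, ← Complex.normSq_eq_conj_mul_self] using this
  · have h2 : dotProduct (star r) (Z.mulVec r) =
        ∑ i, ((hZ.1.eigenvalues i : ℂ) * (star (c i) * c i)) := by
      rw [congrArg (fun M => dotProduct (star r) (M *ᵥ r)) hspec, Unitary.conjStarAlgAut_apply,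
        ← Matrix.mulVec_mulVec, ← Matrix.mulVec_mulVec, dotProduct_mulVec,
        ← hstarc, ← hc]
      simp [Matrix.mulVec_diagonal, dotProduct, Function.comp]
      exact Finset.sum_congr rfl fun i _ => by ring
    have := congrArg Complex.re h2
    rw [Complex.re_sum] at this
    rw [this]
    congr 1
    funext i
    simp [← Complex.normSq_eq_conj_mul_self]
    ring
end ray


/-- Lemma 4: Rayleigh-quotient lower bound on the log-det SINR functional. For
`Z` Hermitian positive semidefinite, `α₁, α₂ ≥ 0` and a unit vector `r`
(`rᴴ r = 1`), letting `t = Re(rᴴ Z r) ≥ 0`,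
`1 + α₁ t / (α₂ t + 1) ≤ Re(det(I + α₁ (I + α₂ Z)⁻¹ Z))`. -/
theorem det_sinr_rayleigh_lower_bound (N : ℕ) (Z : Matrix (Fin N) (Fin N) ℂ)
    (hZ : Z.PosSemidef) (α₁ α₂ : ℝ) (hα₁ : 0 ≤ α₁) (hα₂ : 0 ≤ α₂)
    (r : Fin N → ℂ) (hr : dotProduct (star r) r = 1) :
    1 + α₁ * (dotProduct (star r) (Z.mulVec r)).re /
        (α₂ * (dotProduct (star r) (Z.mulVec r)).re + 1) ≤
      (Matrix.det (1 + (α₁ : ℂ) • ((1 + (α₂ : ℂ) • Z)⁻¹ * Z))).re := by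
  set lam := hZ.1.eigenvalues with hlamdef
  have hlam : ∀ i, 0 ≤ lam i := hZ.eigenvalues_nonneg
  -- determinant computation
  set M : Matrix (Fin N) (Fin N) ℂ := 1 + (α₂ : ℂ) • Z with hM
  have hdet2 : M.det = ((∏ i, (1 + α₂ * lam i) : ℝ) : ℂ) := by
    rw [hM, det_one_add_smul Z hZ α₂]
    push_cast
    rfl
  have hP2pos : (0:ℝ) < ∏ i, (1 + α₂ * lam i) :=
    Finset.prod_pos fun i _ => by nlinarith [hlam i]
  have hMunit : IsUnit M.det := by
    rw [hdet2]
    simp only [isUnit_iff_ne_zero, ne_eq, Complex.ofReal_eq_zero]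
    exact ne_of_gt hP2pos
  have hkey : 1 + (α₁ : ℂ) • (M⁻¹ * Z) = M⁻¹ * (1 + ((α₁ + α₂ : ℝ) : ℂ) • Z) := by
    have : (1 : Matrix (Fin N) (Fin N) ℂ) + ((α₁ + α₂ : ℝ) : ℂ) • Z = M + (α₁ : ℂ) • Z := by
      rw [hM]
      push_cast
      rw [add_smul]
      abel
    rw [this, mul_add, Matrix.nonsing_inv_mul M hMunit, Matrix.mul_smul]
  have hdet12 : (1 + ((α₁ + α₂ : ℝ) : ℂ) • Z).det = ((∏ i, (1 + (α₁ + α₂) * lam i) : ℝ) : ℂ) := by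
    rw [det_one_add_smul Z hZ (α₁ + α₂)]
    push_cast
    rfl
  have hdetfin : (Matrix.det (1 + (α₁ : ℂ) • (M⁻¹ * Z))).re =
      (∏ i, (1 + (α₁ + α₂) * lam i)) / (∏ i, (1 + α₂ * lam i)) := by
    rw [hkey, Matrix.det_mul, Matrix.det_nonsing_inv, Ring.inverse_eq_inv', hdet2, hdet12,
      ← Complex.ofReal_inv, ← Complex.ofReal_mul, Complex.ofReal_re, inv_mul_eq_div]
  rw [hdetfin]
  obtain ⟨w, hw0, hw1, hwt⟩ := ray_decomp Z hZ r hr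
  rw [hwt]
  exact key_real_ineq lam w hlam hw0 hw1 α₁ α₂ hα₁ hα₂
end

section
/- (Lemma 4, equality case.) Let r ∈ ℂ^N be a unit vector (rᴴ r = 1), let λ ≥ 0 be real, let Z = λ · r rᴴ (the rank-one positive semidefinite matrix with entries λ r_i conj(r_j)), and let α₁, α₂ ≥ 0 be reals. Then det( I + α₁ (I + α₂ Z)⁻¹ Z ) = 1 + α₁ λ / (α₂ λ + 1), and Re(rᴴ Z r) = λ, so the Rayleigh-quotient lower bound holds with equality: 1 + α₁ Re(rᴴZr)/(α₂ Re(rᴴZr) + 1) = Re( det( I + α₁ (I + α₂ Z)⁻¹ Z ) ). -/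
open Matrix ComplexOrder

/-- Lemma 4, equality case: for a unit vector `r`, `λ ≥ 0`, the rank-one matrix
`Z = λ r rᴴ` and `α₁, α₂ ≥ 0`, one has
`det(I + α₁ (I + α₂ Z)⁻¹ Z) = 1 + α₁ λ / (α₂ λ + 1)` and `Re(rᴴ Z r) = λ`, so the
Rayleigh-quotient lower bound holds with equality. -/
theorem det_sinr_rayleigh_equality (N : ℕ) (r : Fin N → ℂ)
    (hr : dotProduct (star r) r = 1) (lam : ℝ) (hlam : 0 ≤ lam)
    (α₁ α₂ : ℝ) (hα₁ : 0 ≤ α₁) (hα₂ : 0 ≤ α₂)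
    (Z : Matrix (Fin N) (Fin N) ℂ)
    (hZ : Z = (lam : ℂ) • Matrix.vecMulVec r (star r)) :
    Matrix.det (1 + (α₁ : ℂ) • ((1 + (α₂ : ℂ) • Z)⁻¹ * Z)) =
      ((1 + α₁ * lam / (α₂ * lam + 1) : ℝ) : ℂ) ∧
    (dotProduct (star r) (Z.mulVec r)).re = lam ∧
    1 + α₁ * (dotProduct (star r) (Z.mulVec r)).re /
        (α₂ * (dotProduct (star r) (Z.mulVec r)).re + 1) =
      (Matrix.det (1 + (α₁ : ℂ) • ((1 + (α₂ : ℂ) • Z)⁻¹ * Z))).re := by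
  set P : Matrix (Fin N) (Fin N) ℂ := Matrix.vecMulVec r (star r) with hP
  have hdenom : (α₂ * lam + 1 : ℝ) ≠ 0 := by positivity
  have hdenomC : ((α₂ : ℂ) * lam + 1) ≠ 0 := by
    exact_mod_cast (Complex.ofReal_ne_zero.mpr hdenom)
  -- determinant of 1 + c • P
  have hdet : ∀ c : ℂ, Matrix.det (1 + c • P) = 1 + c := by
    intro c
    have h1 : c • P = Matrix.replicateCol Unit (c • r) * Matrix.replicateRow Unit (star r) := by
      rw [hP, ← Matrix.vecMulVec_eq]
      ext i j
      simp [Matrix.vecMulVec_apply, mul_assoc]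
    rw [h1, Matrix.det_one_add_replicateCol_mul_replicateRow, dotProduct_smul, hr, smul_eq_mul, mul_one]
  -- P * P = P
  have hPP : P * P = P := by
    ext i j
    have : ∑ k, (star r k * r k) = 1 := hr
    simp only [hP, Matrix.mul_apply, Matrix.vecMulVec_apply]
    calc ∑ k, r i * star r k * (r k * star r j)
        = (∑ k, star r k * r k) * (r i * star r j) := by
          rw [Finset.sum_mul]; congr 1; ext k; ring
      _ = r i * star r j := by rw [this, one_mul]
  -- inverse computation
  have hdetA : Matrix.det (1 + (α₂ : ℂ) • Z) = (α₂ : ℂ) * lam + 1 := by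
    rw [hZ, smul_smul, hdet, add_comm]
  have hunit : IsUnit (1 + (α₂ : ℂ) • Z).det := by
    rw [hdetA]; exact isUnit_iff_ne_zero.mpr hdenomC
  have hinv : (1 + (α₂ : ℂ) • Z)⁻¹ * Z = ((lam : ℂ) / ((α₂ : ℂ) * lam + 1)) • P := by
    have key : (1 + (α₂ : ℂ) • Z) * (((lam : ℂ) / ((α₂ : ℂ) * lam + 1)) • P) = Z := by
      rw [hZ, smul_smul, Matrix.add_mul, Matrix.one_mul, Matrix.smul_mul, Matrix.mul_smul,
        hPP, smul_smul, ← add_smul]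
      congr 1
      field_simp
      ring
    calc (1 + (α₂ : ℂ) • Z)⁻¹ * Z
        = (1 + (α₂ : ℂ) • Z)⁻¹ * ((1 + (α₂ : ℂ) • Z) *
            (((lam : ℂ) / ((α₂ : ℂ) * lam + 1)) • P)) := by rw [key]
      _ = _ := by rw [← Matrix.mul_assoc, Matrix.nonsing_inv_mul _ hunit, Matrix.one_mul]
  have hdetmain : Matrix.det (1 + (α₁ : ℂ) • ((1 + (α₂ : ℂ) • Z)⁻¹ * Z)) =
      ((1 + α₁ * lam / (α₂ * lam + 1) : ℝ) : ℂ) := by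
    rw [hinv, smul_smul, hdet]
    push_cast
    ring
  have hray : (dotProduct (star r) (Z.mulVec r)).re = lam := by
    have : dotProduct (star r) (Z.mulVec r) = (lam : ℂ) := by
      rw [hZ]
      have hmv : ((lam : ℂ) • P).mulVec r = (lam : ℂ) • ((star r ⬝ᵥ r) • r) := by
        ext i
        simp only [Matrix.mulVec, Matrix.smul_apply, hP, Matrix.vecMulVec_apply,
          dotProduct, Pi.smul_apply, smul_eq_mul, Finset.mul_sum]
        rw [Finset.sum_mul, Finset.mul_sum]
        exact Finset.sum_congr rfl fun k _ => by ring
      rw [hmv, hr, one_smul, dotProduct_smul, hr, smul_eq_mul, mul_one]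
    rw [this, Complex.ofReal_re]
  refine ⟨hdetmain, hray, ?_⟩
  rw [hray, hdetmain, Complex.ofReal_re]
end
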